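/- For all integers a ≥ 0 and b ≥ 0, the double integral identity (1/2) ∫_ℝ ∫_ℝ x^{2a} (y^{2b+1} − 2b·y^{2b−1}) sign(y − x) e^{−x²/2 − y²/2} dx dy = Γ(a + b + 1/2) holds (for b = 0 the term 2b·y^{2b−1} is interpreted as 0). -/

import Mathlib

open MeasureTheory

section Aux
open Real Set Filter


lemma myIntegrableMono (n : ℕ) {c : ℝ} (hc : 0 < c) :
    Integrable (fun y : ℝ => y ^ n * Real.exp (-c * y ^ 2)) := by
  have h := integrable_rpow_mul_exp_neg_mul_sq hc
    (s := (n : ℝ)) (lt_of_lt_of_le neg_one_lt_zero (Nat.cast_nonneg n))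
  simp_rw [Real.rpow_natCast] at h
  exact h

lemma myExpHalf : ∀ y : ℝ, Real.exp (-y ^ 2 / 2) = Real.exp (-(1/2 : ℝ) * y ^ 2) :=
  fun y => by ring_nf

lemma myIntF' (b : ℕ) :
    Integrable (fun y : ℝ => (2*(b:ℝ)*y^(2*b-1) - y^(2*b+1)) * Real.exp (-y^2/2)) := by
  have h := ((myIntegrableMono (2*b-1) one_half_pos).const_mul (2*(b:ℝ))).sub
    (myIntegrableMono (2*b+1) one_half_pos)
  exact h.congr (Filter.Eventually.of_forall fun y => by simp only [Pi.sub_apply]; rw [myExpHalf]; ring)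

lemma myDeriv (b : ℕ) (y : ℝ) :
    HasDerivAt (fun t : ℝ => t ^ (2*b) * Real.exp (-t^2/2))
      ((2*(b:ℝ)*y^(2*b-1) - y^(2*b+1)) * Real.exp (-y^2/2)) y := by
  have h1 : HasDerivAt (fun t : ℝ => -t^2/2) (-y) y := by
    have h0 := (hasDerivAt_pow 2 y).neg.div_const 2
    refine h0.congr_deriv ?_
    simp; ring
  have h2 := (hasDerivAt_pow (2*b) y).mul h1.exp
  refine h2.congr_deriv ?_
  have : y ^ (2*b+1) = y ^ (2*b) * y := pow_succ y (2*b)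
  push_cast
  rw [this]; ring

lemma myTendsto (b : ℕ) :
    Tendsto (fun t : ℝ => t ^ (2*b) * Real.exp (-t^2/2)) (Filter.cocompact ℝ) (nhds 0) := by
  have h := tendsto_rpow_abs_mul_exp_neg_mul_sq_cocompact (one_half_pos) ((2*b : ℕ) : ℝ)
  refine h.congr fun t => ?_
  rw [Real.rpow_natCast, pow_mul, sq_abs, ← pow_mul]
  rw [← myExpHalf]

lemma mySignMeasurable : Measurable Real.sign := by
  have : Real.sign = fun r : ℝ => if r < 0 then (-1 : ℝ) else if 0 < r then 1 else 0 := by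
    funext r; rfl
  rw [this]
  exact Measurable.ite (measurableSet_lt measurable_id measurable_const) measurable_const
    (Measurable.ite (measurableSet_lt measurable_const measurable_id) measurable_const
      measurable_const)

lemma mySignAbs (r : ℝ) : |Real.sign r| ≤ 1 := by
  rcases Real.sign_apply_eq r with h | h | h <;> rw [h] <;> norm_num

lemma myAeNe (x : ℝ) : ∀ᵐ y : ℝ, y ≠ x := by
  rw [ae_iff]
  simpa [not_not, Set.setOf_eq_eq_singleton] using measure_singleton (α := ℝ) x

lemma myInnerEq (b : ℕ) (x : ℝ) :
    (∫ y : ℝ, (y ^ (2*b+1) - 2*(b:ℝ) * y ^ (2*b-1)) * Real.sign (y - x) * Real.exp (-y^2/2))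
      = 2 * (x ^ (2*b) * Real.exp (-x^2/2)) := by
  set F : ℝ → ℝ := fun t => t ^ (2*b) * Real.exp (-t^2/2) with hF
  set F' : ℝ → ℝ := fun t => (2*(b:ℝ)*t^(2*b-1) - t^(2*b+1)) * Real.exp (-t^2/2) with hF'
  set h : ℝ → ℝ := fun y => (y ^ (2*b+1) - 2*(b:ℝ) * y ^ (2*b-1)) * Real.sign (y - x) *
    Real.exp (-y^2/2) with hh
  have hmeas : AEStronglyMeasurable h volume := by
    refine Measurable.aestronglyMeasurable ?_
    exact (((measurable_id.pow_const _).sub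
      ((measurable_id.pow_const _).const_mul _)).mul
      (mySignMeasurable.comp (measurable_id.sub_const x))).mul
      ((measurable_id.pow_const 2).neg.div_const 2).exp
  have hint : Integrable h := by
    refine Integrable.mono' (myIntF' b).abs hmeas (Eventually.of_forall fun y => ?_)
    have : ‖h y‖ = |(y ^ (2*b+1) - 2*(b:ℝ) * y ^ (2*b-1)) * Real.exp (-y^2/2)| *
        |Real.sign (y - x)| := by
      rw [hh]; simp only [Real.norm_eq_abs]
      rw [show (y ^ (2*b+1) - 2*(b:ℝ) * y ^ (2*b-1)) * Real.sign (y - x) * Real.exp (-y^2/2)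
        = ((y ^ (2*b+1) - 2*(b:ℝ) * y ^ (2*b-1)) * Real.exp (-y^2/2)) * Real.sign (y-x) by ring,
        abs_mul]
    rw [this]
    calc _ ≤ |(y ^ (2*b+1) - 2*(b:ℝ) * y ^ (2*b-1)) * Real.exp (-y^2/2)| * 1 :=
          mul_le_mul_of_nonneg_left (mySignAbs _) (abs_nonneg _)
      _ = |F' y| := by rw [mul_one, hF', ← abs_neg]; congr 1; ring
  have hbot : Tendsto F atBot (nhds 0) :=
    (myTendsto b).mono_left (le_trans le_sup_left (le_of_eq (cocompact_eq_atBot_atTop).symm))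
  have htop : Tendsto F atTop (nhds 0) :=
    (myTendsto b).mono_left (le_trans le_sup_right (le_of_eq (cocompact_eq_atBot_atTop).symm))
  have hIic : (∫ y in Iic x, h y) = F x := by
    have e1 : (∫ y in Iic x, h y) = ∫ y in Iic x, F' y := by
      refine setIntegral_congr_ae measurableSet_Iic ((myAeNe x).mono fun y hy hyle => ?_)
      simp only [hh, hF']
      rw [Real.sign_of_neg (sub_neg.mpr (lt_of_le_of_ne hyle hy))]
      ring
    rw [e1, integral_Iic_of_hasDerivAt_of_tendsto' (fun y _ => myDeriv b y)
      (myIntF' b).integrableOn hbot, sub_zero]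
  have hIoi : (∫ y in Ioi x, h y) = F x := by
    have e1 : (∫ y in Ioi x, h y) = ∫ y in Ioi x, -F' y := by
      refine setIntegral_congr_fun measurableSet_Ioi fun y hy => ?_
      simp only [hh, hF']
      rw [Real.sign_of_pos (sub_pos.mpr hy)]
      ring
    rw [e1, integral_neg, integral_Ioi_of_hasDerivAt_of_tendsto' (fun y _ => myDeriv b y)
      (myIntF' b).integrableOn htop, zero_sub, neg_neg]
  calc (∫ y : ℝ, h y) = (∫ y in Iic x, h y) + ∫ y in Ioi x, h y :=
        (intervalIntegral.integral_Iic_add_Ioi hint.integrableOn hint.integrableOn).symm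
    _ = 2 * (x ^ (2*b) * Real.exp (-x^2/2)) := by rw [hIic, hIoi, hF]; ring

lemma myGammaKey (n : ℕ) :
    (∫ x : ℝ, x ^ (2*n) * Real.exp (-x^2)) = Real.Gamma ((n:ℝ) + 1/2) := by
  have h := integral_rpow_mul_exp_neg_rpow (p := 2) (q := ((2*n : ℕ) : ℝ)) two_pos
    (lt_of_lt_of_le neg_one_lt_zero (Nat.cast_nonneg _))
  rw [show (((2*n:ℕ):ℝ) + 1) / 2 = (n:ℝ) + 1/2 by push_cast; ring] at h
  have h2 : (∫ x in Ioi (0:ℝ), x ^ ((2*n:ℕ):ℝ) * Real.exp (-x ^ (2:ℝ)))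
      = ∫ x in Ioi (0:ℝ), x ^ (2*n) * Real.exp (-x^2) := by
    refine setIntegral_congr_fun measurableSet_Ioi fun x _ => ?_
    rw [Real.rpow_natCast, show (2:ℝ) = ((2:ℕ):ℝ) by norm_num, Real.rpow_natCast]
  rw [h2] at h
  calc (∫ x : ℝ, x ^ (2*n) * Real.exp (-x^2))
      = ∫ x : ℝ, (fun t : ℝ => t ^ (2*n) * Real.exp (-t^2)) |x| := by
        refine integral_congr_ae (Eventually.of_forall fun x => ?_)
        simp only [pow_mul, sq_abs]
    _ = 2 * ∫ x in Ioi (0:ℝ), x ^ (2*n) * Real.exp (-x^2) := integral_comp_abs (f := fun t : ℝ => t ^ (2*n) * Real.exp (-t^2))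
    _ = Real.Gamma ((n:ℝ) + 1/2) := by rw [h]; ring


end Aux

/-- The double integral identity
`(1/2) ∫∫ x^{2a} (y^{2b+1} - 2b y^{2b-1}) sign(y-x) e^{-x²/2-y²/2} dx dy = Γ(a+b+1/2)`
(for `b = 0` the term `2b·y^{2b-1}` vanishes since its coefficient is `0`). -/
theorem skew_integral_gamma (a b : ℕ) :
    (1 / 2) * ∫ x : ℝ, ∫ y : ℝ,
        x ^ (2 * a) * (y ^ (2 * b + 1) - (2 * (b : ℝ)) * y ^ (2 * b - 1)) *
          Real.sign (y - x) * Real.exp (-x ^ 2 / 2 - y ^ 2 / 2) =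
      Real.Gamma ((a : ℝ) + (b : ℝ) + 1 / 2) := by
  have inner : ∀ x : ℝ, (∫ y : ℝ,
      x ^ (2 * a) * (y ^ (2 * b + 1) - (2 * (b : ℝ)) * y ^ (2 * b - 1)) *
        Real.sign (y - x) * Real.exp (-x ^ 2 / 2 - y ^ 2 / 2))
      = 2 * (x ^ (2 * (a + b)) * Real.exp (-x ^ 2)) := by
    intro x
    have e1 : (fun y : ℝ => x ^ (2 * a) * (y ^ (2 * b + 1) - (2 * (b : ℝ)) * y ^ (2 * b - 1)) *
        Real.sign (y - x) * Real.exp (-x ^ 2 / 2 - y ^ 2 / 2))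
        = fun y : ℝ => (x ^ (2 * a) * Real.exp (-x ^ 2 / 2)) *
          ((y ^ (2 * b + 1) - 2 * (b : ℝ) * y ^ (2 * b - 1)) * Real.sign (y - x) *
            Real.exp (-y ^ 2 / 2)) := by
      funext y
      rw [show -x ^ 2 / 2 - y ^ 2 / 2 = (-x ^ 2 / 2) + (-y ^ 2 / 2) by ring, Real.exp_add]
      ring
    rw [e1, integral_const_mul, myInnerEq b x]
    rw [show 2 * (a + b) = 2 * a + 2 * b by ring, pow_add,
      show Real.exp (-x ^ 2) = Real.exp (-x ^ 2 / 2) * Real.exp (-x ^ 2 / 2) by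
        rw [← Real.exp_add]; ring_nf]
    ring
  rw [show (fun x : ℝ => ∫ y : ℝ,
      x ^ (2 * a) * (y ^ (2 * b + 1) - (2 * (b : ℝ)) * y ^ (2 * b - 1)) *
        Real.sign (y - x) * Real.exp (-x ^ 2 / 2 - y ^ 2 / 2))
      = fun x : ℝ => 2 * (x ^ (2 * (a + b)) * Real.exp (-x ^ 2)) from funext inner]
  rw [integral_const_mul, myGammaKey (a + b)]
  push_cast
  ring
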